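/- arXiv:1105.0825 — 3 statements merged into one kernel-verified Lean document; each statement's English description precedes it below -/
import Mathlib

section
/- Let Γ be a group generated by a finite set S, and suppose there is a pseudo-norm ‖·‖ on Γ and a quasimorphism q : Γ → ℝ with |q(g)| ≤ ‖g‖ for all g, and whose homogenisation satisfies q̂(g) ≠ 0 for some g ∈ Γ. Then the translation length τ(g) := lim_{n→∞} |gⁿ|/n with respect to the word norm of S is positive. -/
/-- The word norm of `g` with respect to a generating set `S`. -/
noncomputable def wordLength {G : Type*} [Group G] (S : Set G) (g : G) : ℕ :=
  sInf {k : ℕ | ∃ l : List G,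
    l.length = k ∧ (∀ s ∈ l, s ∈ S ∨ s⁻¹ ∈ S) ∧ l.prod = g}

/-- Let `Γ` be a group generated by a finite set `S`, and suppose there is a
pseudo-norm `N` on `Γ` and a quasimorphism `q : Γ → ℝ` with `|q(g)| ≤ N g`
for all `g`, whose homogenisation `q̂` satisfies `q̂(g) ≠ 0` for some `g`.
Then the translation length `τ(g) = lim_{n→∞} |gⁿ|/n` with respect to the
word norm of `S` is positive. -/
theorem undistorted_of_nonzero_homogenisation
    {Γ : Type*} [Group Γ] (S : Finset Γ)
    (hgen : ∀ g : Γ, ∃ l : List Γ,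
      (∀ s ∈ l, s ∈ (S : Set Γ) ∨ s⁻¹ ∈ (S : Set Γ)) ∧ l.prod = g)
    (N : Γ → ℝ)
    (hone : N 1 = 0)
    (hinv : ∀ g : Γ, N g⁻¹ = N g)
    (hsub : ∀ g h : Γ, N (g * h) ≤ N g + N h)
    (q : Γ → ℝ) (D : ℝ)
    (hq : ∀ g h : Γ, |q g - q (g * h) + q h| ≤ D)
    (hqN : ∀ g : Γ, |q g| ≤ N g)
    (g : Γ) (qhg : ℝ)
    (hlim : Filter.Tendsto (fun n : ℕ => q (g ^ n) / n) Filter.atTop (nhds qhg))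
    (hne : qhg ≠ 0) :
    ∀ τ : ℝ,
      Filter.Tendsto (fun n : ℕ => (wordLength (S : Set Γ) (g ^ n) : ℝ) / n)
        Filter.atTop (nhds τ) → 0 < τ := by
  intro τ hτ
  -- nonnegativity of N
  have hN0 : ∀ x : Γ, 0 ≤ N x := by
    intro x
    have h1 := hsub x x⁻¹
    rw [mul_inv_cancel, hone, hinv] at h1
    linarith
  -- the constant C
  set C : ℝ := 1 + ∑ s ∈ S, N s with hC
  have hCpos : 0 < C := by
    have : 0 ≤ ∑ s ∈ S, N s := Finset.sum_nonneg fun s _ => hN0 s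
    simp [hC]; linarith
  have hCbound : ∀ s : Γ, (s ∈ (S : Set Γ) ∨ s⁻¹ ∈ (S : Set Γ)) → N s ≤ C := by
    intro s hs
    have key : ∀ t : Γ, t ∈ S → N t ≤ C := by
      intro t ht
      have := Finset.single_le_sum (f := N) (fun i _ => hN0 i) ht
      simp [hC]; linarith
    rcases hs with hs | hs
    · exact key s hs
    · have := key s⁻¹ hs
      rwa [hinv] at this
  -- N of a product of generators
  have hlist : ∀ l : List Γ, (∀ s ∈ l, s ∈ (S : Set Γ) ∨ s⁻¹ ∈ (S : Set Γ)) →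
      N l.prod ≤ C * l.length := by
    intro l
    induction l with
    | nil => intro _; simp [hone]
    | cons a t ih =>
      intro hmem
      have h1 : N a ≤ C := hCbound a (hmem a List.mem_cons_self)
      have h2 : N t.prod ≤ C * t.length := ih fun s hs => hmem s (List.mem_cons_of_mem a hs)
      have h3 := hsub a t.prod
      simp only [List.prod_cons, List.length_cons]
      push_cast
      calc N (a * t.prod) ≤ N a + N t.prod := h3
        _ ≤ C + C * t.length := by linarith
        _ = C * (t.length + 1) := by ring
  -- N h ≤ C * wordLength S h
  have hNword : ∀ h : Γ, N h ≤ C * (wordLength (S : Set Γ) h : ℝ) := by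
    intro h
    obtain ⟨l, hl1, hl2⟩ := hgen h
    have hne' : {k : ℕ | ∃ l : List Γ,
        l.length = k ∧ (∀ s ∈ l, s ∈ (S : Set Γ) ∨ s⁻¹ ∈ (S : Set Γ)) ∧ l.prod = h}.Nonempty :=
      ⟨l.length, l, rfl, hl1, hl2⟩
    obtain ⟨l', hl'1, hl'2, hl'3⟩ := Nat.sInf_mem hne'
    rw [wordLength, ← hl'1, ← hl'3]
    exact hlist l' hl'2
  -- limits
  have habs : Filter.Tendsto (fun n : ℕ => |q (g ^ n) / n|) Filter.atTop (nhds |qhg|) :=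
    hlim.abs
  have hdiv : Filter.Tendsto (fun n : ℕ => |q (g ^ n) / n| / C) Filter.atTop
      (nhds (|qhg| / C)) := habs.div_const C
  have hle : ∀ᶠ n : ℕ in Filter.atTop,
      |q (g ^ n) / n| / C ≤ (wordLength (S : Set Γ) (g ^ n) : ℝ) / n := by
    filter_upwards [Filter.eventually_ge_atTop 1] with n hn
    have hn' : (0 : ℝ) < n := by exact_mod_cast hn
    have h1 : |q (g ^ n)| ≤ C * (wordLength (S : Set Γ) (g ^ n) : ℝ) :=
      (hqN _).trans (hNword _)
    rw [abs_div, abs_of_pos hn']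
    rw [div_div, div_le_div_iff₀ (by positivity) hn']
    calc |q (g ^ n)| * n ≤ C * (wordLength (S : Set Γ) (g ^ n) : ℝ) * n := by
          nlinarith [hn'.le]
      _ = (wordLength (S : Set Γ) (g ^ n) : ℝ) * (n * C) := by ring
  have hτge : |qhg| / C ≤ τ := le_of_tendsto_of_tendsto hdiv hτ hle
  have : 0 < |qhg| / C := div_pos (abs_pos.mpr hne) hCpos
  linarith
end

section
/- Let G be a group acting on a compact space X by homeomorphisms and K : G → C⁰(X;ℝ)/ℝ a one-cocycle with continuous values. Suppose g ∈ G has fixed points x and y with q(g) := K(g)(y) − K(g)(x) ≠ 0. Then q(gⁿ) = n·q(g) for all n ∈ ℤ, and g is undistorted in G: in every finitely generated subgroup of G containing g, the translation length of g is positive, using that h ↦ sup_{u,v ∈ X} |K(h)(v) − K(h)(u)| is a finite pseudo-norm on G. -/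
/-- Let `G` act on a compact space `X` by homeomorphisms and let
`K : G → C⁰(X;ℝ)/ℝ` be a one-cocycle with continuous values.  Suppose
`g ∈ G` has fixed points `x, y` with `q(g) := K(g)(y) − K(g)(x) ≠ 0`.
Then `q(gⁿ) = n·q(g)` for all `n ∈ ℤ`, and `g` is undistorted in `G`:
in every finitely generated subgroup of `G` containing `g` the translation
length of `g` is positive. -/
theorem undistorted_of_two_fixed_points
    {G X : Type*} [Group G] [TopologicalSpace X] [CompactSpace X]
    (ρ : G → X ≃ₜ X)
    (hρone : ρ 1 = Homeomorph.refl X)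
    (hρmul : ∀ f g : G, ∀ x : X, ρ (f * g) x = ρ f (ρ g x))
    (K : G → C(X, ℝ))
    (hK : ∀ f g : G, ∃ c : ℝ, ∀ x : X, K (f * g) x = K f (ρ g x) + K g x + c)
    (g : G) (x y : X) (hx : ρ g x = x) (hy : ρ g y = y)
    (hq : K g y - K g x ≠ 0) :
    (∀ n : ℤ, K (g ^ n) y - K (g ^ n) x = n * (K g y - K g x)) ∧
    (∀ S : Finset G, g ∈ Subgroup.closure (S : Set G) →
      ∀ τ : ℝ,
        Filter.Tendsto (fun n : ℕ => (wordLength (S : Set G) (g ^ n) : ℝ) / n)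
          Filter.atTop (nhds τ) → 0 < τ) := by
  classical
  -- `K 1` is constant
  have hK1 : ∀ u v : X, K 1 u = K 1 v := by
    obtain ⟨c, hc⟩ := hK 1 1
    have key : ∀ u : X, K 1 u = -c := by
      intro u
      have := hc u
      rw [one_mul, hρone] at this
      simp only [Homeomorph.refl_apply, id_eq] at this
      linarith
    intro u v; rw [key u, key v]
  -- fixed points of powers
  have hpx : ∀ n : ℕ, ρ (g ^ n) x = x := by
    intro n; induction n with
    | zero => simp [hρone]
    | succ n ih => rw [pow_succ, hρmul, hx, ih]
  have hpy : ∀ n : ℕ, ρ (g ^ n) y = y := by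
    intro n; induction n with
    | zero => simp [hρone]
    | succ n ih => rw [pow_succ, hρmul, hy, ih]
  -- cocycle additivity at common fixed points
  have hadd : ∀ f h : G, ρ h x = x → ρ h y = y →
      K (f * h) y - K (f * h) x = (K f y - K f x) + (K h y - K h x) := by
    intro f h hhx hhy
    obtain ⟨c, hc⟩ := hK f h
    rw [hc y, hc x, hhx, hhy]; ring
  -- q on natural powers
  have qn : ∀ n : ℕ, K (g ^ n) y - K (g ^ n) x = n * (K g y - K g x) := by
    intro n; induction n with
    | zero => simp [pow_zero, hK1 y x]
    | succ n ih =>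
      rw [pow_succ, hadd (g ^ n) g hx hy, ih]
      push_cast; ring
  -- q on integer powers
  have qz : ∀ n : ℤ, K (g ^ n) y - K (g ^ n) x = n * (K g y - K g x) := by
    intro n
    cases n with
    | ofNat m => simpa [zpow_natCast] using qn m
    | negSucc m =>
      have h1 : K ((g ^ (m + 1))⁻¹ * g ^ (m + 1)) y - K ((g ^ (m + 1))⁻¹ * g ^ (m + 1)) x
          = (K (g ^ (m + 1))⁻¹ y - K (g ^ (m + 1))⁻¹ x) +
            (K (g ^ (m + 1)) y - K (g ^ (m + 1)) x) := by
        exact hadd _ _ (hpx (m + 1)) (hpy (m + 1))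
      rw [inv_mul_cancel] at h1
      have h0 : K (1 : G) y - K (1 : G) x = 0 := by rw [hK1 y x]; ring
      have hm := qn (m + 1)
      have : K (g ^ (m + 1))⁻¹ y - K (g ^ (m + 1))⁻¹ x = -((m + 1 : ℕ) * (K g y - K g x)) := by
        rw [← hm]; linarith [h1, h0]
      rw [zpow_negSucc, this]
      push_cast [Int.cast_negSucc]; ring
  refine ⟨qz, ?_⟩
  intro S hgS τ hτ
  -- the sup pseudo-norm
  haveI : Nonempty X := ⟨x⟩
  set C : G → ℝ := fun h => ⨆ p : X × X, |K h p.1 - K h p.2| with hCdef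
  have hbdd : ∀ h : G, BddAbove (Set.range fun p : X × X => |K h p.1 - K h p.2|) := by
    intro h
    have hcont : Continuous fun p : X × X => |K h p.1 - K h p.2| :=
      (((K h).continuous.comp continuous_fst).sub ((K h).continuous.comp continuous_snd)).abs
    exact (isCompact_range hcont).bddAbove
  have hCle : ∀ (h : G) (u v : X), |K h v - K h u| ≤ C h := fun h u v =>
    le_ciSup (hbdd h) (v, u)
  have hC0 : ∀ h : G, 0 ≤ C h := fun h => le_trans (abs_nonneg _) (hCle h x x)
  have hCadd : ∀ f h : G, C (f * h) ≤ C f + C h := by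
    intro f h
    apply ciSup_le
    intro p
    obtain ⟨c, hc⟩ := hK f h
    have heq : K (f * h) p.1 - K (f * h) p.2
        = (K f (ρ h p.1) - K f (ρ h p.2)) + (K h p.1 - K h p.2) := by
      rw [hc p.1, hc p.2]; ring
    calc |K (f * h) p.1 - K (f * h) p.2|
        ≤ |K f (ρ h p.1) - K f (ρ h p.2)| + |K h p.1 - K h p.2| := by
          rw [heq]; exact abs_add_le _ _
      _ ≤ C f + C h := add_le_add (hCle f _ _) (hCle h _ _)
  have hC1 : C 1 ≤ 0 := by
    apply ciSup_le
    intro p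
    rw [hK1 p.1 p.2]
    simp
  -- bound on generators
  set M : ℝ := ∑ s ∈ S, (C s + C s⁻¹) with hMdef
  have hMgen : ∀ s : G, s ∈ S ∨ s⁻¹ ∈ S → C s ≤ M := by
    intro s hs
    have hterm : ∀ i : G, i ∈ S → 0 ≤ C i + C i⁻¹ := fun i _ =>
      add_nonneg (hC0 i) (hC0 i⁻¹)
    rcases hs with hs | hs
    · calc C s ≤ C s + C s⁻¹ := le_add_of_nonneg_right (hC0 _)
        _ ≤ M := Finset.single_le_sum hterm hs
    · calc C s ≤ C s⁻¹ + C s⁻¹⁻¹ := by rw [inv_inv]; exact le_add_of_nonneg_left (hC0 _)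
        _ ≤ M := Finset.single_le_sum hterm hs
  -- bound on words
  have hlist : ∀ l : List G, (∀ s ∈ l, s ∈ (S : Set G) ∨ s⁻¹ ∈ (S : Set G)) →
      C l.prod ≤ l.length * M := by
    intro l
    induction l with
    | nil => intro _; simpa using hC1
    | cons s l ih =>
      intro hl
      have hs : C s ≤ M := by
        have := hl s List.mem_cons_self
        simpa using hMgen s (by simpa using this)
      have hl' := ih (fun t ht => hl t (List.mem_cons_of_mem s ht))
      rw [List.prod_cons]
      calc C (s * l.prod) ≤ C s + C l.prod := hCadd s l.prod
        _ ≤ M + l.length * M := add_le_add hs hl'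
        _ = (s :: l).length * M := by
          simp [List.length_cons]; push_cast; ring
  -- key inequality
  have hwl : ∀ n : ℕ, (n : ℝ) * |K g y - K g x| ≤ (wordLength (S : Set G) (g ^ n) : ℝ) * M := by
    intro n
    have hmem : g ^ n ∈ Subgroup.closure (S : Set G) := pow_mem hgS n
    rw [← Subgroup.mem_toSubmonoid, Subgroup.closure_toSubmonoid] at hmem
    obtain ⟨l, hl1, hl2⟩ := Submonoid.exists_list_of_mem_closure hmem
    have hl1' : ∀ s ∈ l, s ∈ (S : Set G) ∨ s⁻¹ ∈ (S : Set G) := by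
      intro s hs
      rcases hl1 s hs with h | h
      · exact Or.inl h
      · exact Or.inr (Set.mem_inv.mp h)
    have hne : {k : ℕ | ∃ l' : List G, l'.length = k ∧
        (∀ s ∈ l', s ∈ (S : Set G) ∨ s⁻¹ ∈ (S : Set G)) ∧ l'.prod = g ^ n}.Nonempty :=
      ⟨l.length, l, rfl, hl1', hl2⟩
    obtain ⟨l', hlen, hl1'', hl2''⟩ := Nat.sInf_mem hne
    have hCbound : C (g ^ n) ≤ (wordLength (S : Set G) (g ^ n) : ℝ) * M := by
      rw [wordLength, ← hlen, ← hl2'']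
      exact hlist l' hl1''
    have hqn : |K (g ^ n) y - K (g ^ n) x| = (n : ℝ) * |K g y - K g x| := by
      rw [qn n, abs_mul, Nat.abs_cast]
    calc (n : ℝ) * |K g y - K g x| = |K (g ^ n) y - K (g ^ n) x| := hqn.symm
      _ ≤ C (g ^ n) := hCle _ _ _
      _ ≤ _ := hCbound
  have hqpos : 0 < |K g y - K g x| := abs_pos.mpr hq
  have hMpos : 0 < M := by
    by_contra h
    push_neg at h
    have h1 := hwl 1
    norm_num at h1
    have h2 : (wordLength (S : Set G) g : ℝ) * M ≤ 0 :=
      mul_nonpos_of_nonneg_of_nonpos (Nat.cast_nonneg _) h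
    linarith
  -- conclude
  have hτge : |K g y - K g x| / M ≤ τ := by
    refine ge_of_tendsto hτ ?_
    filter_upwards [Filter.eventually_ge_atTop 1] with n hn
    have hn' : (0 : ℝ) < n := by exact_mod_cast Nat.lt_of_lt_of_le Nat.zero_lt_one hn
    rw [div_le_div_iff₀ hMpos hn']
    calc |K g y - K g x| * n = n * |K g y - K g x| := mul_comm _ _
      _ ≤ (wordLength (S : Set G) (g ^ n) : ℝ) * M := hwl n
  exact lt_of_lt_of_le (div_pos hqpos hMpos) hτge
end

section
/- Let g be a bijection of a set X preserving two subsets ℓ₁, ℓ₂ identified with circles on which g acts with topological rotation numbers ρ₁, ρ₂ ∈ ℝ/ℤ. Suppose there is a group G of bijections of X containing g and a one-cocycle K : G → (X → ℝ)/ℝ whose associated two-cocycles G_{x₁}, G_{x₂} at points x₁ ∈ ℓ₁, x₂ ∈ ℓ₂ are bounded on ⟨g⟩ with local rotation numbers r₁ = k₁ρ₁ and r₂ = k₂ρ₂ for nonzero integers k₁, k₂ (periods of an integral cocycle on ℓᵢ). If g is distorted, then r₁ = r₂ in ℝ/ℤ, hence k₁ρ₁ = k₂ρ₂ in ℚ/ℤ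 when the rotation numbers are as above. -/
/-- Let `g` be a homeomorphism of a compact space `X` (an element of a
group `G` acting on `X` by homeomorphisms) preserving two circles
`ℓ₁, ℓ₂` on which it acts with topological rotation numbers `ρ₁, ρ₂`.
Let `K : G → C⁰(X;ℝ)/ℝ` be a one-cocycle whose associated two-cocycles
`G_{x₁}, G_{x₂}` at `x₁ ∈ ℓ₁, x₂ ∈ ℓ₂` are bounded on `⟨g⟩` with local
rotation numbers `r₁ = k₁ρ₁`, `r₂ = k₂ρ₂` (`k₁, k₂` nonzero integers,
the periods of an integral cocycle on the `ℓᵢ`); the local rotation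
number `rᵢ` is computed as `lim bᵢ(gⁿ)/n` for a primitive `bᵢ` of
`G_{xᵢ}` on `⟨g⟩`, and integrality gives `q(gⁿ) = n·s + b₁(gⁿ) − b₂(gⁿ)`
for an integer `s`.  If `g` is distorted, then `r₁ = r₂` in `ℝ/ℤ`, hence
`k₁ρ₁ = k₂ρ₂` in `ℚ/ℤ`. -/
theorem distorted_implies_equal_local_rotation_numbers
    {G X : Type*} [Group G] [TopologicalSpace X] [CompactSpace X]
    (act : G → X ≃ₜ X)
    (hactone : act 1 = Homeomorph.refl X)
    (hactmul : ∀ f g : G, ∀ x : X, act (f * g) x = act f (act g x))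
    (K : G → C(X, ℝ))
    (hK : ∀ f g : G, ∃ c : ℝ, ∀ x : X,
      K (f * g) x = K f (act g x) + K g x + c)
    (g : G) (x₁ x₂ : X)
    -- boundedness of `G_{x₁}` and `G_{x₂}` on the cyclic subgroup `⟨g⟩`
    (hbound₁ : ∃ C : ℝ, ∀ m n : ℤ,
      |K (g ^ m) (act (g ^ n) x₁) - K (g ^ m) x₁| ≤ C)
    (hbound₂ : ∃ C : ℝ, ∀ m n : ℤ,
      |K (g ^ m) (act (g ^ n) x₂) - K (g ^ m) x₂| ≤ C)
    (b₁ b₂ : ℤ → ℝ) (r₁ r₂ : ℝ)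
    -- `bᵢ` is a primitive of `G_{xᵢ}` on `⟨g⟩`
    (hb₁ : ∀ m n : ℤ, b₁ m - b₁ (m + n) + b₁ n =
      K (g ^ m) (act (g ^ n) x₁) - K (g ^ m) x₁)
    (hb₂ : ∀ m n : ℤ, b₂ m - b₂ (m + n) + b₂ n =
      K (g ^ m) (act (g ^ n) x₂) - K (g ^ m) x₂)
    -- the local rotation numbers at `x₁` and `x₂`
    (hr₁ : Filter.Tendsto (fun n : ℕ => b₁ n / n) Filter.atTop (nhds r₁))
    (hr₂ : Filter.Tendsto (fun n : ℕ => b₂ n / n) Filter.atTop (nhds r₂))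
    (k₁ k₂ : ℤ) (hk₁ : k₁ ≠ 0) (hk₂ : k₂ ≠ 0) (ρ₁ ρ₂ : ℝ)
    (hrho₁ : r₁ = (k₁ : ℝ) * ρ₁) (hrho₂ : r₂ = (k₂ : ℝ) * ρ₂)
    -- integrality: `q(gⁿ) = n·s + b₁(n) − b₂(n)` for an integer `s`
    (hint : ∃ s : ℤ, ∀ n : ℤ,
      K (g ^ n) x₂ - K (g ^ n) x₁ = (n : ℝ) * (s : ℝ) + (b₁ n - b₂ n))
    -- `g` is distorted
    (hdist : ∃ S : Finset G, g ∈ Subgroup.closure (S : Set G) ∧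
      Filter.Tendsto (fun n : ℕ => (wordLength (S : Set G) (g ^ n) : ℝ) / n)
        Filter.atTop (nhds 0)) :
    ∃ m : ℤ, r₁ - r₂ = (m : ℝ) ∧ (k₁ : ℝ) * ρ₁ - (k₂ : ℝ) * ρ₂ = (m : ℝ) := by
  classical
  obtain ⟨s, hs⟩ := hint
  obtain ⟨S, hgS, hwl⟩ := hdist
  -- `K 1` is constant
  have hK1 : K 1 x₂ = K 1 x₁ := by
    obtain ⟨c, hc⟩ := hK 1 1
    have h2 := hc x₂
    have h1 := hc x₁
    simp only [one_mul, hactone, Homeomorph.refl_apply, id_eq] at h2 h1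
    linarith
  -- a uniform bound on generators
  set M : ℝ := ∑ t ∈ S, (‖K t‖ + ‖K t⁻¹‖) with hM
  have hMnn : 0 ≤ M := Finset.sum_nonneg fun t _ => by positivity
  have hKs : ∀ t : G, (t ∈ (S : Set G) ∨ t⁻¹ ∈ (S : Set G)) → ∀ x : X, |K t x| ≤ M := by
    intro t ht x
    have hx : |K t x| ≤ ‖K t‖ := by
      simpa using (K t).norm_coe_le_norm x
    rcases ht with ht | ht
    · refine hx.trans ?_
      calc ‖K t‖ ≤ ‖K t‖ + ‖K t⁻¹‖ := le_add_of_nonneg_right (norm_nonneg _)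
        _ ≤ M := Finset.single_le_sum (f := fun u => ‖K u‖ + ‖K u⁻¹‖)
            (fun u _ => by positivity) ht
    · refine hx.trans ?_
      calc ‖K t‖ = ‖K t⁻¹‖ + ‖K t⁻¹⁻¹‖ - ‖K t⁻¹‖ := by rw [inv_inv]; ring
        _ ≤ M - ‖K t⁻¹‖ := by
            have := Finset.single_le_sum (f := fun u => ‖K u‖ + ‖K u⁻¹‖)
              (fun u _ => by positivity) ht
            linarith
        _ ≤ M := by
            have := norm_nonneg (K t⁻¹); linarith
  -- key estimate on words
  have key : ∀ l : List G, (∀ t ∈ l, t ∈ (S : Set G) ∨ t⁻¹ ∈ (S : Set G)) →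
      |K l.prod x₂ - K l.prod x₁| ≤ 2 * M * l.length := by
    intro l
    induction l with
    | nil =>
        intro _
        simp [hK1]
    | cons t l ih =>
        intro hmem
        have hl := ih fun u hu => hmem u (List.mem_cons_of_mem _ hu)
        have ht := hmem t List.mem_cons_self
        obtain ⟨c, hc⟩ := hK t l.prod
        have h2 := hKs t ht (act l.prod x₂)
        have h1 := hKs t ht (act l.prod x₁)
        rw [List.prod_cons]
        have decomp : K (t * l.prod) x₂ - K (t * l.prod) x₁ =
            (K t (act l.prod x₂) - K t (act l.prod x₁)) +
              (K l.prod x₂ - K l.prod x₁) := by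
          rw [hc x₂, hc x₁]; ring
        rw [decomp]
        have tri := abs_add_le (K t (act l.prod x₂) - K t (act l.prod x₁))
          (K l.prod x₂ - K l.prod x₁)
        have tri2 := abs_sub (K t (act l.prod x₂)) (K t (act l.prod x₁))
        have hlen : ((t :: l).length : ℝ) = (l.length : ℝ) + 1 := by
          push_cast [List.length_cons]; ring
        rw [hlen]
        nlinarith [abs_nonneg (K l.prod x₂ - K l.prod x₁)]
  -- the difference is controlled by word length
  have hwl_real : ∀ n : ℕ,
      |K (g ^ (n : ℤ)) x₂ - K (g ^ (n : ℤ)) x₁|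
        ≤ 2 * M * (wordLength (S : Set G) (g ^ n)) := by
    intro n
    have hmem : g ^ n ∈ Subgroup.closure (S : Set G) := pow_mem hgS n
    have hmem' : g ^ n ∈ Submonoid.closure ((S : Set G) ∪ (S : Set G)⁻¹) := by
      rw [← Subgroup.closure_toSubmonoid]; exact hmem
    obtain ⟨lw, hlw1, hlw2⟩ := Submonoid.exists_list_of_mem_closure hmem'
    have hne : (wordLength (S : Set G) (g ^ n)) ∈
        {k : ℕ | ∃ l : List G, l.length = k ∧
          (∀ u ∈ l, u ∈ (S : Set G) ∨ u⁻¹ ∈ (S : Set G)) ∧ l.prod = g ^ n} := by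
      apply Nat.sInf_mem
      refine ⟨lw.length, lw, rfl, ?_, hlw2⟩
      intro u hu
      rcases hlw1 u hu with h | h
      · exact Or.inl h
      · exact Or.inr (Set.mem_inv.mp h)
    obtain ⟨l, hl1, hl2, hl3⟩ := hne
    have := key l hl2
    rw [hl3, hl1] at this
    rw [zpow_natCast]
    exact this
  -- hence the difference divided by n tends to 0
  have hphi : Filter.Tendsto
      (fun n : ℕ => (K (g ^ (n : ℤ)) x₂ - K (g ^ (n : ℤ)) x₁) / n)
      Filter.atTop (nhds 0) := by
    have hlim : Filter.Tendsto
        (fun n : ℕ => 2 * M * ((wordLength (S : Set G) (g ^ n) : ℝ) / n))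
        Filter.atTop (nhds 0) := by
      have := hwl.const_mul (2 * M)
      simpa using this
    refine squeeze_zero_norm (fun n => ?_) hlim
    rcases Nat.eq_zero_or_pos n with rfl | hn
    · simp
    · have hn' : (0:ℝ) < n := by exact_mod_cast hn
      rw [Real.norm_eq_abs, abs_div, abs_of_pos hn']
      calc |K (g ^ (n : ℤ)) x₂ - K (g ^ (n : ℤ)) x₁| / n
          ≤ (2 * M * (wordLength (S : Set G) (g ^ n))) / n := by
            gcongr; exact hwl_real n
        _ = 2 * M * ((wordLength (S : Set G) (g ^ n) : ℝ) / n) := by ring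
  -- identify the limit
  have heq : ∀ n : ℕ, b₁ n / n - b₂ n / n =
      (K (g ^ (n : ℤ)) x₂ - K (g ^ (n : ℤ)) x₁) / n - ((n : ℝ) * s) / n := by
    intro n
    rw [hs (n : ℤ)]
    push_cast
    ring
  have hslim : Filter.Tendsto (fun n : ℕ => ((n : ℝ) * s) / n)
      Filter.atTop (nhds (s : ℝ)) := by
    apply Filter.Tendsto.congr' _ (tendsto_const_nhds)
    filter_upwards [Filter.eventually_gt_atTop 0] with n hn
    have hn' : ((n:ℝ)) ≠ 0 := by positivity
    field_simp
  have hlhs : Filter.Tendsto (fun n : ℕ => b₁ n / n - b₂ n / n)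
      Filter.atTop (nhds (r₁ - r₂)) := hr₁.sub hr₂
  have hrhs : Filter.Tendsto (fun n : ℕ =>
      (K (g ^ (n : ℤ)) x₂ - K (g ^ (n : ℤ)) x₁) / n - ((n : ℝ) * s) / n)
      Filter.atTop (nhds (0 - (s : ℝ))) := hphi.sub hslim
  have huniq : r₁ - r₂ = 0 - (s : ℝ) := by
    refine tendsto_nhds_unique ?_ hrhs
    exact hlhs.congr heq
  refine ⟨-s, ?_, ?_⟩
  · rw [huniq]; push_cast; ring
  · rw [← hrho₁, ← hrho₂, huniq]; push_cast; ring
end
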